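/- arXiv:0809.4858 — 3 statements merged into one kernel-verified Lean document; each statement's English description precedes it below -/
import Mathlib

section
/- Let $K$ be a real symmetric $(2n)\times(2n)$ matrix, $j$ a positive integer, and define the $(4n)\times(4n)$ symmetric matrix $Q_j(K) = \frac{1}{1+j^2}\begin{pmatrix} -K & jJ^t \\ jJ & -K \end{pmatrix}$, where $J = \begin{pmatrix} 0 & -I_n \\ I_n & 0 \end{pmatrix}$. Then every eigenvalue of $Q_j(K)$ has even (geometric, equivalently algebraic) multiplicity. -/
open Matrix

lemma even_finrank_of_invariant {V : Type*} [AddCommGroup V] [Module ℝ V]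
    [FiniteDimensional ℝ V] (p : Submodule ℝ V) (g : V →ₗ[ℝ] V)
    (hmaps : ∀ x ∈ p, g x ∈ p) (hsq : ∀ x, g (g x) = -x) :
    Even (Module.finrank ℝ p) := by
  set f := g.restrict hmaps with hf
  have hfsq : ∀ x : p, f (f x) = -x := by
    intro x
    apply Subtype.ext
    have : ((f (f x) : p) : V) = g (g (x : V)) := by
      simp [hf, LinearMap.restrict_coe_apply]
    rw [this, hsq]
    rfl
  have h : f * f = (-1 : ℝ) • (1 : p →ₗ[ℝ] p) := by
    ext x; simp [Module.End.mul_apply, hfsq x]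
  have hdet : (LinearMap.det f) ^ 2 = (-1 : ℝ) ^ (Module.finrank ℝ p) := by
    rw [sq, ← _root_.map_mul, h, LinearMap.det_smul]
    simp
  rcases Nat.even_or_odd (Module.finrank ℝ p) with he | ho
  · exact he
  · exfalso
    rw [ho.neg_one_pow] at hdet
    nlinarith [sq_nonneg (LinearMap.det f)]

/-- Every eigenvalue of `Q_j(K)` has even multiplicity. -/
theorem eigenvalues_Qj_even_multiplicity (n : ℕ) (j : ℕ) (hj : 0 < j)
    (K : Matrix (Fin n ⊕ Fin n) (Fin n ⊕ Fin n) ℝ) (hK : K.IsSymm)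
    (J : Matrix (Fin n ⊕ Fin n) (Fin n ⊕ Fin n) ℝ)
    (hJ : J = Matrix.fromBlocks 0 (-1) 1 0)
    (Q : Matrix ((Fin n ⊕ Fin n) ⊕ (Fin n ⊕ Fin n)) ((Fin n ⊕ Fin n) ⊕ (Fin n ⊕ Fin n)) ℝ)
    (hQ : Q = ((1 + (j : ℝ) ^ 2)⁻¹) •
      Matrix.fromBlocks (-K) ((j : ℝ) • Jᵀ) ((j : ℝ) • J) (-K)) :
    ∀ μ : ℝ, Even (Module.finrank ℝ (LinearMap.ker (Matrix.toLin' (Q - μ • 1)))) := by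
  intro μ
  set M : Matrix ((Fin n ⊕ Fin n) ⊕ (Fin n ⊕ Fin n)) ((Fin n ⊕ Fin n) ⊕ (Fin n ⊕ Fin n)) ℝ :=
    Matrix.fromBlocks 0 (-1) 1 0 with hM
  have hJT : Jᵀ = -J := by
    subst hJ
    simp [Matrix.fromBlocks_transpose, Matrix.fromBlocks_neg]
  have hcommQ : M * Q = Q * M := by
    subst hQ
    rw [Matrix.mul_smul, Matrix.smul_mul]
    congr 1
    rw [hJT, hM]
    simp [Matrix.fromBlocks_multiply, Matrix.mul_smul, Matrix.smul_mul]
  have hcomm : M * (Q - μ • 1) = (Q - μ • 1) * M := by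
    rw [Matrix.mul_sub, Matrix.sub_mul, hcommQ, Matrix.mul_smul, Matrix.smul_mul,
      Matrix.mul_one, Matrix.one_mul]
  have hMM : M * M = -1 := by
    rw [hM, show (-1 : Matrix ((Fin n ⊕ Fin n) ⊕ (Fin n ⊕ Fin n))
        ((Fin n ⊕ Fin n) ⊕ (Fin n ⊕ Fin n)) ℝ) = Matrix.fromBlocks (-1) 0 0 (-1) by
      rw [← Matrix.fromBlocks_one, Matrix.fromBlocks_neg]; simp]
    simp [Matrix.fromBlocks_multiply]
  set A := Q - μ • 1 with hA
  apply even_finrank_of_invariant _ (Matrix.toLin' M)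
  · intro x hx
    rw [LinearMap.mem_ker] at hx ⊢
    have h1 : Matrix.toLin' A (Matrix.toLin' M x) = Matrix.toLin' (A * M) x := by
      rw [Matrix.toLin'_mul]; rfl
    rw [h1, ← hcomm, Matrix.toLin'_mul]
    simp [hx]
  · intro x
    have h1 : Matrix.toLin' M (Matrix.toLin' M x) = Matrix.toLin' (M * M) x := by
      rw [Matrix.toLin'_mul]; rfl
    rw [h1, hMM]
    simp
end

section
/- Let $H: \mathbb{R}^{2n} \times \mathbb{R}^k \to \mathbb{R}$ be continuous together with its first two partial derivatives in the first variable, fix $x_0 \in \mathbb{R}^{2n}$, and suppose $\nabla_x^2 H(x_0,\lambda) = \mathrm{diag}(A(\lambda), B(\lambda))$ with $A(\lambda), B(\lambda)$ symmetric $n\times n$ matrices. Fix $\lambda_0 \in \mathbb{R}^k$ and let $N(\lambda_0) = \lfloor \max\{\sqrt{\nu} : \nu \text{ a real positive eigenvalue of } A(\lambda_0)B(\lambda_0)\} \rfloor$ (with $N(\lambda_0)=0$ if there are no positive eigenvalues). Then there exists an open neighbourhood $U \subset \mathbb{R}^k$ of $\lambda_0$ such that $\det(A(\lambda)B(\lambda)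 - j^2 I) \neq 0$ for every integer $j > N(\lambda_0)$ and every $\lambda \in U$. -/
open Matrix

/-- A real element of the spectrum of a real matrix is bounded in absolute value by
the sum of the absolute values of all entries (via Gershgorin). -/
lemma abs_le_of_mem_spectrum_aux {n : ℕ} (M : Matrix (Fin n) (Fin n) ℝ) {μ : ℝ}
    (hμ : μ ∈ spectrum ℝ M) : |μ| ≤ ∑ i, ∑ j, |M i j| := by
  classical
  have hdet : (algebraMap ℝ (Matrix (Fin n) (Fin n) ℝ) μ - M).det = 0 := by
    by_contra h
    exact spectrum.mem_iff.mp hμ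
      ((Matrix.isUnit_iff_isUnit_det _).mpr (isUnit_iff_ne_zero.mpr h))
  have h2 : ¬ ∀ k, ∑ j ∈ Finset.univ.erase k,
      ‖(algebraMap ℝ (Matrix (Fin n) (Fin n) ℝ) μ - M) k j‖ <
      ‖(algebraMap ℝ (Matrix (Fin n) (Fin n) ℝ) μ - M) k k‖ :=
    fun h => det_ne_zero_of_sum_row_lt_diag h hdet
  push_neg at h2
  obtain ⟨i, hi⟩ := h2
  have hdiag : (algebraMap ℝ (Matrix (Fin n) (Fin n) ℝ) μ - M) i i = μ - M i i := by
    simp [Matrix.sub_apply, Matrix.algebraMap_matrix_apply]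
  have hoff : ∀ j ∈ Finset.univ.erase i,
      ‖(algebraMap ℝ (Matrix (Fin n) (Fin n) ℝ) μ - M) i j‖ = |M i j| := by
    intro j hj
    have hji : j ≠ i := Finset.ne_of_mem_erase hj
    simp [Matrix.sub_apply, Matrix.algebraMap_matrix_apply, Ne.symm hji, Real.norm_eq_abs]
  rw [hdiag, Finset.sum_congr rfl hoff, Real.norm_eq_abs] at hi
  have h3 : |μ| ≤ ∑ j, |M i j| := by
    have habs : |μ| ≤ |μ - M i i| + |M i i| := by
      have := abs_add_le (μ - M i i) (M i i)
      simpa using this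
    have h4 : ∑ j ∈ Finset.univ.erase i, |M i j| + |M i i| = ∑ j, |M i j| :=
      Finset.sum_erase_add _ _ (Finset.mem_univ i)
    linarith
  refine h3.trans ?_
  exact Finset.single_le_sum (f := fun p => ∑ j, |M p j|)
    (fun p _ => Finset.sum_nonneg fun j _ => abs_nonneg _) (Finset.mem_univ i)

lemma mem_spectrum_of_det_eq_zero_aux {n : ℕ} (M : Matrix (Fin n) (Fin n) ℝ) {μ : ℝ}
    (h : (M - μ • (1 : Matrix (Fin n) (Fin n) ℝ)).det = 0) : μ ∈ spectrum ℝ M := by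
  rw [spectrum.mem_iff]
  intro hu
  rw [Matrix.isUnit_iff_isUnit_det, isUnit_iff_ne_zero] at hu
  apply hu
  have heq : algebraMap ℝ (Matrix (Fin n) (Fin n) ℝ) μ - M = -(M - μ • 1) := by
    rw [Algebra.algebraMap_eq_smul_one, neg_sub]
  rw [heq, Matrix.det_neg, h, mul_zero]

/-- If `∇ₓ²H(x₀,λ) = diag(A(λ),B(λ))` with `A, B` continuous and symmetric, and
`N(λ₀) = ⌊max{√ν : ν positive eigenvalue of A(λ₀)B(λ₀)}⌋`, then on some open
neighbourhood `U` of `λ₀` we have `det(A(λ)B(λ) - j²I) ≠ 0` for all `j > N(λ₀)`. -/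
theorem detecting_functions_nonzero_above_N (n k : ℕ)
    (A B : (Fin k → ℝ) → Matrix (Fin n) (Fin n) ℝ)
    (hAcont : ∀ i j : Fin n, Continuous fun lam => A lam i j)
    (hBcont : ∀ i j : Fin n, Continuous fun lam => B lam i j)
    (hAsymm : ∀ lam, (A lam).IsSymm) (hBsymm : ∀ lam, (B lam).IsSymm)
    (lam0 : Fin k → ℝ) (N : ℕ)
    (hN : N = ⌊Real.sqrt (sSup {ν : ℝ | ν ∈ spectrum ℝ (A lam0 * B lam0) ∧ 0 < ν})⌋₊) :
    ∃ U : Set (Fin k → ℝ), IsOpen U ∧ lam0 ∈ U ∧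
      ∀ j : ℕ, N < j → ∀ lam ∈ U,
        (A lam * B lam - ((j : ℝ) ^ 2) • (1 : Matrix (Fin n) (Fin n) ℝ)).det ≠ 0 := by
  classical
  set F : ℕ → (Fin k → ℝ) → ℝ := fun j lam =>
    (A lam * B lam - ((j : ℝ) ^ 2) • (1 : Matrix (Fin n) (Fin n) ℝ)).det with hF
  have hentry : ∀ i j : Fin n, Continuous fun lam => (A lam * B lam) i j := by
    intro i j
    simp only [Matrix.mul_apply]
    exact continuous_finset_sum _ fun l _ => (hAcont i l).mul (hBcont l j)
  have hABcont : Continuous fun lam => A lam * B lam := continuous_matrix hentry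
  have hFcont : ∀ j : ℕ, Continuous (F j) :=
    fun j => (hABcont.sub continuous_const).matrix_det
  set b : (Fin k → ℝ) → ℝ := fun lam => ∑ i, ∑ j, |(A lam * B lam) i j| with hb
  have hbcont : Continuous b :=
    continuous_finset_sum _ fun i _ => continuous_finset_sum _ fun j _ => (hentry i j).abs
  have hbnn : ∀ lam, 0 ≤ b lam :=
    fun lam => Finset.sum_nonneg fun i _ => Finset.sum_nonneg fun j _ => abs_nonneg _
  set C : ℝ := b lam0 + 1 with hC
  have hC1 : (1 : ℝ) ≤ C := by have := hbnn lam0; linarith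
  have hbound : ∀ lam, ∀ p q : Fin n, |(A lam * B lam) p q| ≤ b lam := by
    intro lam p q
    calc |(A lam * B lam) p q| ≤ ∑ j, |(A lam * B lam) p j| :=
          Finset.single_le_sum (f := fun j => |(A lam * B lam) p j|)
            (fun j _ => abs_nonneg _) (Finset.mem_univ q)
      _ ≤ b lam := Finset.single_le_sum (f := fun i => ∑ j, |(A lam * B lam) i j|)
          (fun i _ => Finset.sum_nonneg fun j _ => abs_nonneg _) (Finset.mem_univ p)
  have hbdd : BddAbove {ν : ℝ | ν ∈ spectrum ℝ (A lam0 * B lam0) ∧ 0 < ν} :=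
    ⟨b lam0, fun ν hν => (le_abs_self ν).trans (abs_le_of_mem_spectrum_aux _ hν.1)⟩
  -- pointwise nonvanishing at lam0
  have key0 : ∀ j : ℕ, N < j → F j lam0 ≠ 0 := by
    intro j hj h0
    have hmem : ((j : ℝ) ^ 2) ∈ spectrum ℝ (A lam0 * B lam0) :=
      mem_spectrum_of_det_eq_zero_aux _ h0
    have hj0 : 0 < j := lt_of_le_of_lt (Nat.zero_le N) hj
    have hjpos : (0 : ℝ) < (j : ℝ) ^ 2 := by positivity
    set s : ℝ := sSup {ν : ℝ | ν ∈ spectrum ℝ (A lam0 * B lam0) ∧ 0 < ν} with hs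
    have hle : ((j : ℝ) ^ 2) ≤ s := le_csSup hbdd ⟨hmem, hjpos⟩
    have hsn : 0 ≤ s := le_trans hjpos.le hle
    have h1 : Real.sqrt s < (N : ℝ) + 1 := by
      rw [hN]; exact_mod_cast Nat.lt_floor_add_one (Real.sqrt s)
    have h2 : (N : ℝ) + 1 ≤ (j : ℝ) := by exact_mod_cast hj
    have h3 : Real.sqrt s < (j : ℝ) := lt_of_lt_of_le h1 h2
    have h4 : s < (j : ℝ) ^ 2 := by
      have := pow_lt_pow_left₀ h3 (Real.sqrt_nonneg s) (n := 2) (by norm_num)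
      rwa [Real.sq_sqrt hsn] at this
    linarith
  set m : ℕ := ⌊Real.sqrt (2 * C)⌋₊ + 1 with hm
  set V : Set (Fin k → ℝ) := b ⁻¹' Set.Iio C with hV
  have hVopen : IsOpen V := isOpen_Iio.preimage hbcont
  have hV0 : lam0 ∈ V := by simp [hV, hC]
  set U : Set (Fin k → ℝ) :=
    V ∩ ⋂ j ∈ Finset.range m, (if N < j then (F j) ⁻¹' {0}ᶜ else Set.univ) with hU
  refine ⟨U, ?_, ?_, ?_⟩
  · refine hVopen.inter (isOpen_biInter_finset fun j _ => ?_)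
    split
    · exact isOpen_compl_singleton.preimage (hFcont j)
    · exact isOpen_univ
  · refine ⟨hV0, Set.mem_iInter₂.mpr fun j _ => ?_⟩
    by_cases h : N < j
    · rw [if_pos h]; exact key0 j h
    · rw [if_neg h]; trivial
  · intro j hj lam hlam
    rcases lt_or_ge j m with hjm | hjm
    · have := Set.mem_iInter₂.mp hlam.2 j (Finset.mem_range.mpr hjm)
      rw [if_pos hj] at this
      exact this
    · -- Gershgorin for large j
      have hblt : b lam < C := hlam.1
      have h2C : (0 : ℝ) ≤ 2 * C := by linarith
      have hjbig : 2 * C < (j : ℝ) ^ 2 := by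
        have hmj : Real.sqrt (2 * C) < (j : ℝ) := by
          calc Real.sqrt (2 * C) < (⌊Real.sqrt (2 * C)⌋₊ : ℝ) + 1 :=
                Nat.lt_floor_add_one _
            _ = (m : ℝ) := by rw [hm]; push_cast; ring
            _ ≤ (j : ℝ) := by exact_mod_cast hjm
        have := pow_lt_pow_left₀ hmj (Real.sqrt_nonneg _) (n := 2) (by norm_num)
        rwa [Real.sq_sqrt h2C] at this
      apply det_ne_zero_of_sum_row_lt_diag
      intro i
      have hdiag : (A lam * B lam - ((j : ℝ) ^ 2) • (1 : Matrix (Fin n) (Fin n) ℝ)) i i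
          = (A lam * B lam) i i - (j : ℝ) ^ 2 := by
        simp [Matrix.sub_apply, Matrix.smul_apply, Matrix.one_apply]
      have hoff : ∀ l ∈ Finset.univ.erase i,
          ‖(A lam * B lam - ((j : ℝ) ^ 2) • (1 : Matrix (Fin n) (Fin n) ℝ)) i l‖
          = |(A lam * B lam) i l| := by
        intro l hl
        have hli : l ≠ i := Finset.ne_of_mem_erase hl
        simp [Matrix.sub_apply, Matrix.smul_apply, Matrix.one_apply_ne (Ne.symm hli),
          Real.norm_eq_abs]
      rw [Finset.sum_congr rfl hoff, hdiag, Real.norm_eq_abs]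
      have hrow : ∑ l ∈ Finset.univ.erase i, |(A lam * B lam) i l| ≤ b lam := by
        calc ∑ l ∈ Finset.univ.erase i, |(A lam * B lam) i l|
            ≤ ∑ l, |(A lam * B lam) i l| :=
              Finset.sum_le_sum_of_subset_of_nonneg (Finset.erase_subset _ _)
                (fun l _ _ => abs_nonneg _)
          _ ≤ b lam := Finset.single_le_sum (f := fun p => ∑ l, |(A lam * B lam) p l|)
              (fun p _ => Finset.sum_nonneg fun l _ => abs_nonneg _) (Finset.mem_univ i)
      have hii : |(A lam * B lam) i i| ≤ b lam := hbound lam i i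
      have hii' : (A lam * B lam) i i ≤ b lam := (le_abs_self _).trans hii
      have hrhs : C < |(A lam * B lam) i i - (j : ℝ) ^ 2| := by
        have h5 : (j : ℝ) ^ 2 - (A lam * B lam) i i
            ≤ |(A lam * B lam) i i - (j : ℝ) ^ 2| := by
          rw [abs_sub_comm]; exact le_abs_self _
        linarith
      linarith
end

section
/- Let $H \in C^2(\mathbb{R}^{2n},\mathbb{R})$ and let $x_0$ be a stationary point ($\nabla H(x_0) = 0$) that is completely degenerate, i.e., $\nabla^2 H(x_0) = 0$. Suppose $(x_m)$ is a sequence of nonconstant periodic solutions of $\dot{x} = J\nabla H(x)$ with minimal periods $T_m$, such that $\sup_t |x_m(t) - x_0| < 1/m$ for each $m$. Then $T_m \to \infty$. Equivalently: for every $C > 0$ there is $\delta > 0$ such that every nonstationary periodic orbit contained in the ball $B(x_0,\delta)$ has minimal period greater than $C$. -/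
open Matrix Filter
open Topology

set_option maxHeartbeats 2000000

/-- If `x₀` is a completely degenerate stationary point of a `C²` Hamiltonian system
(`∇H(x₀)=0`, `∇²H(x₀)=0`) and `(x_m)` is a sequence of nonconstant periodic solutions
of `ẋ = J∇H(x)` with minimal periods `T_m` such that `sup_t ‖x_m(t)-x₀‖ < 1/m`, then
`T_m → ∞`. -/
theorem minimal_periods_tendsto_infty_of_completely_degenerate (n : ℕ)
    (H : EuclideanSpace ℝ (Fin n ⊕ Fin n) → ℝ) (hH : ContDiff ℝ 2 H)
    (J : Matrix (Fin n ⊕ Fin n) (Fin n ⊕ Fin n) ℝ)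
    (hJ : J = Matrix.fromBlocks 0 (-1) 1 0)
    (x0 : EuclideanSpace ℝ (Fin n ⊕ Fin n))
    (hgrad : gradient H x0 = 0)
    (hhess : fderiv ℝ (fun y => gradient H y) x0 = 0)
    (x : ℕ → ℝ → EuclideanSpace ℝ (Fin n ⊕ Fin n)) (T : ℕ → ℝ)
    (hsol : ∀ m, ∀ t : ℝ, HasDerivAt (x m) (Matrix.toEuclideanLin J (gradient H (x m t))) t)
    (hnonconst : ∀ m, ∃ t s : ℝ, x m t ≠ x m s)
    (hTpos : ∀ m, 0 < T m)
    (hTper : ∀ m, Function.Periodic (x m) (T m))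
    (hTmin : ∀ m, ∀ s : ℝ, 0 < s → Function.Periodic (x m) s → T m ≤ s)
    (hclose : ∀ m : ℕ, ∀ t : ℝ, ‖x m t - x0‖ < 1 / (m + 1)) :
    Tendsto T atTop atTop := by
  classical
  set A : EuclideanSpace ℝ (Fin n ⊕ Fin n) →L[ℝ] EuclideanSpace ℝ (Fin n ⊕ Fin n) :=
    LinearMap.toContinuousLinearMap (Matrix.toEuclideanLin J) with hA
  -- the gradient of H is C¹
  have hg : ContDiff ℝ 1 (gradient H) := by
    have h1 : ContDiff ℝ 1 (fderiv ℝ H) := hH.fderiv_right (by norm_num)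
    have h2 : gradient H =
        fun y => (InnerProductSpace.toDual ℝ (EuclideanSpace ℝ (Fin n ⊕ Fin n))).symm
          (fderiv ℝ H y) := rfl
    rw [h2]
    exact (InnerProductSpace.toDual ℝ
      (EuclideanSpace ℝ (Fin n ⊕ Fin n))).symm.contDiff.comp h1
  have hgd : Differentiable ℝ (gradient H) := hg.differentiable one_ne_zero
  have hcont : Continuous (fderiv ℝ (gradient H)) := hg.continuous_fderiv one_ne_zero
  have hhess' : fderiv ℝ (gradient H) x0 = 0 := hhess
  rw [tendsto_atTop]
  intro C
  set C' : ℝ := max C 1 with hC'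
  have hC'pos : (0:ℝ) < C' := lt_of_lt_of_le one_pos (le_max_right _ _)
  set ε : ℝ := 1 / ((‖A‖ + 1) * C') with hεdef
  have hApos : (0:ℝ) < ‖A‖ + 1 := by linarith [norm_nonneg A]
  have hε : 0 < ε := one_div_pos.mpr (mul_pos hApos hC'pos)
  -- choose δ from continuity of the Hessian at x0
  have h0 : Tendsto (fun y => ‖fderiv ℝ (gradient H) y‖) (𝓝 x0) (𝓝 0) := by
    have := (hcont.tendsto x0).norm
    rw [hhess', norm_zero] at this
    exact this
  have hev : ∀ᶠ y in 𝓝 x0, ‖fderiv ℝ (gradient H) y‖ < ε :=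
    h0.eventually (gt_mem_nhds hε)
  obtain ⟨δ, hδpos, hδ⟩ := Metric.eventually_nhds_iff.mp hev
  obtain ⟨N, hN⟩ : ∃ N : ℕ, (1:ℝ) / (N + 1) < δ := exists_nat_one_div_lt hδpos
  refine eventually_atTop.mpr ⟨N, fun m hm => ?_⟩
  -- setup for fixed m
  set P : ℝ := T m with hPdef
  have hP : 0 < P := hTpos m
  have hrδ : (1:ℝ) / (m + 1) < δ := by
    refine lt_of_le_of_lt ?_ hN
    apply one_div_le_one_div_of_le (by positivity)
    have : (N:ℝ) ≤ m := Nat.cast_le.mpr hm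
    linarith
  have hball : ∀ t : ℝ, x m t ∈ Metric.closedBall x0 (1 / (m + 1)) := by
    intro t
    rw [Metric.mem_closedBall, dist_eq_norm]
    exact (hclose m t).le
  set v : ℝ → EuclideanSpace ℝ (Fin n ⊕ Fin n) := fun t => A (gradient H (x m t)) with hv
  have hderiv : ∀ t : ℝ, HasDerivAt (x m) (v t) t := fun t => hsol m t
  have hxdiff : Differentiable ℝ (x m) := fun t => (hderiv t).differentiableAt
  have hxcont : Continuous (x m) := hxdiff.continuous
  have hvcont : Continuous v :=
    A.continuous.comp ((hg.continuous).comp hxcont)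
  -- Lipschitz estimate for gradient H on the small closed ball
  have hlip : ∀ t s : ℝ,
      ‖gradient H (x m t) - gradient H (x m s)‖ ≤ ε * ‖x m t - x m s‖ := by
    intro t s
    refine (convex_closedBall x0 (1 / (m + 1))).norm_image_sub_le_of_norm_hasFDerivWithin_le
      (fun y _ => (hgd y).hasFDerivAt.hasFDerivWithinAt) (fun y hy => ?_)
      (hball s) (hball t)
    refine (hδ ?_).le
    rw [Metric.mem_closedBall] at hy
    exact lt_of_le_of_lt hy hrδ
  have hvlip : ∀ t s : ℝ, ‖v t - v s‖ ≤ ‖A‖ * (ε * ‖x m t - x m s‖) := by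
    intro t s
    calc ‖v t - v s‖ = ‖A (gradient H (x m t) - gradient H (x m s))‖ := by
          rw [map_sub]
      _ ≤ ‖A‖ * ‖gradient H (x m t) - gradient H (x m s)‖ := A.le_opNorm _
      _ ≤ ‖A‖ * (ε * ‖x m t - x m s‖) := by
          exact mul_le_mul_of_nonneg_left (hlip t s) (norm_nonneg _)
  -- max of speed on one period
  obtain ⟨t₀, ht₀mem, ht₀max⟩ :=
    (isCompact_Icc (a := (0:ℝ)) (b := P)).exists_isMaxOn
      ⟨0, Set.left_mem_Icc.mpr hP.le⟩ (hvcont.norm.continuousOn)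
  set V : ℝ := ‖v t₀‖ with hV
  have hvper : Function.Periodic v P := by
    intro t
    simp only [hv, hPdef, hTper m t]
  have hVglob : ∀ t : ℝ, ‖v t‖ ≤ V := by
    intro t
    obtain ⟨y, hy, hyeq⟩ := hvper.exists_mem_Ico₀ hP t
    rw [hyeq]
    exact isMaxOn_iff.mp ht₀max y (Set.Ico_subset_Icc_self hy)
  have hxlip : ∀ a b : ℝ, ‖x m a - x m b‖ ≤ V * ‖a - b‖ := by
    intro a b
    exact convex_univ.norm_image_sub_le_of_norm_hasDerivWithin_le
      (fun t _ => (hderiv t).hasDerivWithinAt) (fun t _ => hVglob t)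
      (Set.mem_univ b) (Set.mem_univ a)
  have hVpos : 0 < V := by
    rcases hnonconst m with ⟨a, b, hab⟩
    rcases lt_or_ge 0 V with h | h
    · exact h
    · exfalso
      apply hab
      have h1 := hxlip a b
      have h2 : V * ‖a - b‖ ≤ 0 := mul_nonpos_of_nonpos_of_nonneg h (norm_nonneg _)
      have h3 : ‖x m a - x m b‖ ≤ 0 := le_trans h1 h2
      have := le_antisymm h3 (norm_nonneg _)
      rwa [norm_eq_zero, sub_eq_zero] at this
  -- the integral of the velocity over a period vanishes
  have hper0 : x m P = x m 0 := by simpa using hTper m 0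
  have hint : (∫ t in (0:ℝ)..P, v t) = 0 := by
    rw [intervalIntegral.integral_eq_sub_of_hasDerivAt
      (fun t _ => hderiv t) (hvcont.intervalIntegrable 0 P), hper0, sub_self]
  have hintc : (∫ t in (0:ℝ)..P, (v t₀ - v t)) = P • v t₀ := by
    rw [intervalIntegral.integral_sub (intervalIntegrable_const)
      (hvcont.intervalIntegrable 0 P), hint, sub_zero,
      intervalIntegral.integral_const, sub_zero]
  have hkey : ‖∫ t in (0:ℝ)..P, (v t₀ - v t)‖ ≤ (‖A‖ * (ε * (V * P))) * |P - 0| := by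
    apply intervalIntegral.norm_integral_le_of_norm_le_const
    intro t ht
    rw [Set.uIoc_of_le hP.le] at ht
    have htI : t ∈ Set.Icc 0 P := Set.Ioc_subset_Icc_self ht
    have habs : |t₀ - t| ≤ P := by
      rw [abs_sub_le_iff]
      constructor
      · linarith [ht₀mem.1, ht₀mem.2, htI.1, htI.2]
      · linarith [ht₀mem.1, ht₀mem.2, htI.1, htI.2]
    calc ‖v t₀ - v t‖ ≤ ‖A‖ * (ε * ‖x m t₀ - x m t‖) := hvlip t₀ t
      _ ≤ ‖A‖ * (ε * (V * P)) := by
          apply mul_le_mul_of_nonneg_left _ (norm_nonneg _)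
          apply mul_le_mul_of_nonneg_left _ hε.le
          calc ‖x m t₀ - x m t‖ ≤ V * ‖t₀ - t‖ := hxlip t₀ t
            _ ≤ V * P := by
                apply mul_le_mul_of_nonneg_left _ (norm_nonneg _)
                rwa [Real.norm_eq_abs]
  have hPV : P * V ≤ ‖A‖ * ε * V * P * P := by
    have h1 : ‖P • v t₀‖ = P * V := by
      rw [norm_smul, Real.norm_eq_abs, abs_of_pos hP]
    have h2 : |P - (0:ℝ)| = P := by rw [sub_zero, abs_of_pos hP]
    rw [hintc, h1] at hkey
    rw [h2] at hkey
    nlinarith [hkey]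
  have hone : 1 ≤ ‖A‖ * ε * P := by
    nlinarith [hPV, hVpos, hP, mul_pos hVpos hP]
  -- conclude
  have hεA : (‖A‖ + 1) * ε = 1 / C' := by
    rw [hεdef, one_div, mul_inv, ← mul_assoc, mul_inv_cancel₀ hApos.ne', one_mul, one_div]
  have hAε : ‖A‖ * ε ≤ 1 / C' := by
    rw [← hεA]
    nlinarith [hε]
  have : 1 ≤ (1 / C') * P := by
    calc (1:ℝ) ≤ ‖A‖ * ε * P := hone
      _ ≤ (1 / C') * P := mul_le_mul_of_nonneg_right hAε hP.le
  have hC'le : C' ≤ P := by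
    rw [div_mul_eq_mul_div, one_mul, le_div_iff₀ hC'pos] at this
    linarith
  exact le_trans (le_max_left C 1) hC'le
end
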